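/- arXiv:1604.06418 — 4 statements merged into one kernel-verified Lean document; each statement's English description precedes it below -/
import Mathlib

section
/- There exists a function γ : (0,1] → (0,∞) with γ(u) ↓ 0 as u ↓ 0 such that the following holds: for every submultiplicative positive random variable Y with 0 < E Y < ∞ and every event A with P(A) > 0, one has E[Y·1_A] / E Y ≤ γ(P(A)). -/
open MeasureTheory ProbabilityTheory
open scoped ENNReal NNReal

lemma aux_sq_le : ∀ j : ℕ, ((j : ℝ) + 1)^2 ≤ 5 * (3/2)^j := by
  intro j
  induction j with
  | zero => norm_num
  | succ j ih =>
    rcases lt_or_ge j 4 with h | h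
    · interval_cases j <;> norm_num
    · have hj : (4:ℝ) ≤ j := by exact_mod_cast h
      have : ((j:ℝ) + 2)^2 ≤ (3/2) * ((j:ℝ)+1)^2 := by nlinarith
      push_cast
      calc ((j:ℝ) + 1 + 1)^2 = ((j:ℝ)+2)^2 := by ring
        _ ≤ (3/2) * ((j:ℝ)+1)^2 := this
        _ ≤ (3/2) * (5 * (3/2)^j) := by nlinarith
        _ = 5 * (3/2)^(j+1) := by ring

lemma aux_term_le (j : ℕ) : ((j : ℝ) + 1)^2 * (1/2)^j ≤ 5 * (3/4)^j := by
  have h := aux_sq_le j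
  have h2 : ((3:ℝ)/2)^j * (1/2)^j = (3/4)^j := by
    rw [← mul_pow]; norm_num
  have hp : (0:ℝ) < (1/2)^j := by positivity
  nlinarith [pow_nonneg (by norm_num : (0:ℝ) ≤ 3/4) j]

lemma aux_summable : Summable (fun j : ℕ => ((j : ℝ) + 1)^2 * (1/2)^j) := by
  apply Summable.of_nonneg_of_le (fun j => by positivity) aux_term_le
  exact (summable_geometric_of_lt_one (by norm_num) (by norm_num)).mul_left 5

lemma aux_tsum_le : (∑' j : ℕ, ((j : ℝ) + 1)^2 * (1/2)^j) ≤ 20 := by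
  have h1 : (∑' j : ℕ, ((j : ℝ) + 1)^2 * (1/2)^j) ≤ ∑' j : ℕ, 5 * (3/4:ℝ)^j := by
    exact Summable.tsum_le_tsum aux_term_le aux_summable
      ((summable_geometric_of_lt_one (by norm_num) (by norm_num)).mul_left 5)
  have h2 : (∑' j : ℕ, 5 * (3/4:ℝ)^j) = 20 := by
    rw [tsum_mul_left, tsum_geometric_of_lt_one (by norm_num) (by norm_num)]
    norm_num
  linarith

/-- Lemma 8: there is a universal function `γ : (0,1] → (0,∞)` with `γ(u) ↓ 0` as `u ↓ 0`
such that for every submultiplicative positive random variable `Y` with `0 < E Y < ∞` and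
every event `A` with `P(A) > 0`, `E[Y 1_A] / E Y ≤ γ(P(A))`. -/
theorem submultiplicative_truncated_mean_bound :
    ∃ γ : ℝ → ℝ,
      (∀ u ∈ Set.Ioc (0:ℝ) 1, 0 < γ u) ∧
      Filter.Tendsto γ (nhdsWithin 0 (Set.Ioi 0)) (nhds 0) ∧
      ∀ (Ω : Type) (_ : MeasurableSpace Ω) (μ : Measure Ω), IsProbabilityMeasure μ →
      ∀ Y : Ω → ℝ, Measurable Y → (∀ᵐ ω ∂μ, 0 < Y ω) →
        (∀ y₁ y₂ : ℝ, 0 < y₁ → 0 < y₂ →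
          (μ {ω | y₁ + y₂ < Y ω}).toReal
            ≤ (μ {ω | y₁ < Y ω}).toReal * (μ {ω | y₂ < Y ω}).toReal) →
        Integrable Y μ → 0 < ∫ ω, Y ω ∂μ →
      ∀ A : Set Ω, MeasurableSet A → 0 < (μ A).toReal →
        (∫ ω in A, Y ω ∂μ) / (∫ ω, Y ω ∂μ) ≤ γ ((μ A).toReal) := by
  refine ⟨fun u => 9 * Real.sqrt u, ?_, ?_, ?_⟩
  · intro u hu
    have := Real.sqrt_pos.mpr hu.1
    show (0:ℝ) < 9 * Real.sqrt u
    linarith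
  · have h : Filter.Tendsto (fun u : ℝ => 9 * Real.sqrt u) (nhds 0) (nhds 0) := by
      have := (Real.continuous_sqrt.tendsto 0).const_mul (9:ℝ)
      simpa using this
    exact h.mono_left nhdsWithin_le_nhds
  intro Ω _ μ hμ Y hY hpos hsub hint hm A hA hPA
  set m := ∫ ω, Y ω ∂μ with hm_def
  set c := 2 * m with hc_def
  have hc : 0 < c := by positivity
  have h0 : 0 ≤ᵐ[μ] Y := hpos.mono fun ω h => le_of_lt h
  -- Markov
  have markov : (μ {ω | c < Y ω}).toReal ≤ 1/2 := by
    have hM := mul_meas_ge_le_integral_of_nonneg h0 hint c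
    have hle : μ {ω | c < Y ω} ≤ μ {x | c ≤ Y x} :=
      measure_mono fun ω (h : c < Y ω) => le_of_lt h
    have h1 : (μ {ω | c < Y ω}).toReal ≤ (μ {x | c ≤ Y x}).toReal :=
      ENNReal.toReal_mono (measure_ne_top _ _) hle
    have h2 : (0:ℝ) ≤ (μ {ω | c < Y ω}).toReal := ENNReal.toReal_nonneg
    rw [measureReal_def] at hM
    nlinarith
  -- tail bounds
  have tailR : ∀ j : ℕ, (μ {ω | c * j < Y ω}).toReal ≤ (1/2)^j := by
    intro j
    induction j with
    | zero =>
      simp only [Nat.cast_zero, mul_zero, pow_zero]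
      calc (μ {ω | (0:ℝ) < Y ω}).toReal ≤ (μ Set.univ).toReal :=
            ENNReal.toReal_mono (measure_ne_top _ _) (measure_mono (Set.subset_univ _))
        _ = 1 := by simp
    | succ j ih =>
      match j, ih with
      | 0, _ => simpa using markov
      | (k+1), ih =>
        have hpos1 : 0 < c * ((k:ℝ)+1) := by positivity
        have hseteq : {ω | c * (((k:ℕ)+1+1 : ℕ) : ℝ) < Y ω}
            = {ω | c * ((k:ℝ)+1) + c < Y ω} := by
          ext ω; simp only [Set.mem_setOf_eq]; push_cast; constructor <;> intro h <;> nlinarith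
        rw [hseteq]
        have h2 : (μ {ω | c * ((k:ℝ)+1) < Y ω}).toReal ≤ (1/2)^(k+1) := by
          have := ih; push_cast at this ⊢; convert this using 3
        calc (μ {ω | c * ((k:ℝ)+1) + c < Y ω}).toReal
            ≤ (μ {ω | c * ((k:ℝ)+1) < Y ω}).toReal * (μ {ω | c < Y ω}).toReal :=
              hsub (c * ((k:ℝ)+1)) c hpos1 hc
          _ ≤ (1/2)^(k+1) * (1/2) := by
              apply mul_le_mul h2 markov ENNReal.toReal_nonneg (by positivity)
          _ = (1/2)^(k+1+1) := by ring
  have tailE : ∀ j : ℕ, μ {ω | c * j < Y ω} ≤ ENNReal.ofReal ((1/2)^j) := by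
    intro j
    rw [ENNReal.le_ofReal_iff_toReal_le (measure_ne_top _ _) (by positivity)]
    exact tailR j
  -- shells
  set g : Ω → ℝ≥0∞ := fun ω => ENNReal.ofReal (Y ω) with hg_def
  have hg : Measurable g := hY.ennreal_ofReal
  set S : ℕ → Set Ω := fun j => {ω | c * j < Y ω ∧ Y ω ≤ c * (j+1)} with hS_def
  have hSm : ∀ j, MeasurableSet (S j) := by
    intro j
    exact (measurableSet_lt measurable_const hY).inter (measurableSet_le hY measurable_const)
  have hSd : Pairwise (Function.onFun Disjoint S) := by
    intro i j hij
    rw [Function.onFun, Set.disjoint_left]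
    rintro ω ⟨hi1, hi2⟩ ⟨hj1, hj2⟩
    rcases hij.lt_or_gt with h | h
    · have : ((i:ℝ)+1) ≤ (j:ℝ) := by exact_mod_cast h
      nlinarith
    · have : ((j:ℝ)+1) ≤ (i:ℝ) := by exact_mod_cast h
      nlinarith
  have hSu : (⋃ j, S j) = {ω | 0 < Y ω} := by
    ext ω
    simp only [Set.mem_iUnion, hS_def, Set.mem_setOf_eq]
    constructor
    · rintro ⟨j, hj1, hj2⟩
      have : 0 ≤ c * (j:ℝ) := by positivity
      linarith
    · intro hω
      set r := Y ω / c with hr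
      have hr0 : 0 < r := div_pos hω hc
      have h2 : 1 ≤ ⌈r⌉₊ := Nat.one_le_ceil_iff.mpr hr0
      refine ⟨⌈r⌉₊ - 1, ?_, ?_⟩
      · have h1 : (⌈r⌉₊ : ℝ) < r + 1 := Nat.ceil_lt_add_one hr0.le
        have h3 : ((⌈r⌉₊ - 1 : ℕ) : ℝ) = (⌈r⌉₊ : ℝ) - 1 := by
          push_cast [h2]; ring
        rw [h3]
        have h4 : (⌈r⌉₊ : ℝ) - 1 < r := by linarith
        calc c * ((⌈r⌉₊ : ℝ) - 1) < c * r := by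
              exact mul_lt_mul_of_pos_left h4 hc
          _ = Y ω := by rw [hr]; field_simp [hc.ne']
      · have h3 : ((⌈r⌉₊ - 1 : ℕ) : ℝ) + 1 = (⌈r⌉₊ : ℝ) := by
          push_cast [h2]; ring
        rw [h3]
        have h4 : r ≤ (⌈r⌉₊ : ℝ) := Nat.le_ceil r
        calc Y ω = c * r := by rw [hr]; field_simp [hc.ne']
          _ ≤ c * ⌈r⌉₊ := mul_le_mul_of_nonneg_left h4 hc.le
  -- summability
  have hsum : Summable (fun j : ℕ => (c * ((j:ℝ)+1))^2 * (1/2:ℝ)^j) := by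
    apply (aux_summable.mul_left (c^2)).congr
    intro j; ring
  -- second moment bound
  have key : ∫⁻ ω, g ω ^ (2:ℝ) ∂μ ≤ ENNReal.ofReal (80 * m^2) := by
    have hae : (Set.univ : Set Ω) =ᵐ[μ] {ω | 0 < Y ω} := by
      refine (MeasureTheory.ae_eq_univ.mpr ?_).symm
      rw [Set.compl_setOf]
      simpa [ae_iff] using hpos
    calc ∫⁻ ω, g ω ^ (2:ℝ) ∂μ = ∫⁻ ω in Set.univ, g ω ^ (2:ℝ) ∂μ := by
          rw [setLIntegral_univ]
      _ = ∫⁻ ω in {ω | 0 < Y ω}, g ω ^ (2:ℝ) ∂μ := setLIntegral_congr hae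
      _ = ∫⁻ ω in ⋃ j, S j, g ω ^ (2:ℝ) ∂μ := by rw [hSu]
      _ = ∑' j : ℕ, ∫⁻ ω in S j, g ω ^ (2:ℝ) ∂μ := lintegral_iUnion hSm hSd _
      _ ≤ ∑' j : ℕ, ENNReal.ofReal ((c * ((j:ℝ)+1))^2) * ENNReal.ofReal ((1/2:ℝ)^j) := by
          apply ENNReal.tsum_le_tsum
          intro j
          calc ∫⁻ ω in S j, g ω ^ (2:ℝ) ∂μ
              ≤ ∫⁻ _ in S j, ENNReal.ofReal ((c * ((j:ℝ)+1))^2) ∂μ := by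
                apply setLIntegral_mono' (hSm j)
                intro ω hω
                have hcj : (0:ℝ) ≤ c * (j:ℝ) := by positivity
                have hY0 : 0 ≤ Y ω := le_of_lt (lt_of_le_of_lt hcj hω.1)
                have h1 : g ω ^ (2:ℝ) = ENNReal.ofReal (Y ω ^ 2) := by
                  have hgω : g ω = ENNReal.ofReal (Y ω) := rfl
                  rw [hgω, ENNReal.ofReal_rpow_of_nonneg hY0 (by norm_num : (0:ℝ) ≤ 2),
                    Real.rpow_two]
                rw [h1]
                apply ENNReal.ofReal_le_ofReal
                have h5 := hω.2
                nlinarith [hω.1]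
            _ = ENNReal.ofReal ((c * ((j:ℝ)+1))^2) * μ (S j) := setLIntegral_const _ _
            _ ≤ ENNReal.ofReal ((c * ((j:ℝ)+1))^2) * ENNReal.ofReal ((1/2:ℝ)^j) := by
                apply mul_le_mul_right
                exact le_trans (measure_mono fun ω hω => hω.1) (tailE j)
      _ = ∑' j : ℕ, ENNReal.ofReal ((c * ((j:ℝ)+1))^2 * (1/2:ℝ)^j) := by
          refine tsum_congr fun j => ?_
          rw [← ENNReal.ofReal_mul (by positivity)]
      _ = ENNReal.ofReal (∑' j : ℕ, (c * ((j:ℝ)+1))^2 * (1/2:ℝ)^j) :=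
          (ENNReal.ofReal_tsum_of_nonneg (fun j => by positivity) hsum).symm
      _ ≤ ENNReal.ofReal (80 * m^2) := by
          apply ENNReal.ofReal_le_ofReal
          have heq : (∑' j : ℕ, (c * ((j:ℝ)+1))^2 * (1/2:ℝ)^j)
              = c^2 * ∑' j : ℕ, ((j:ℝ)+1)^2 * (1/2:ℝ)^j := by
            rw [← tsum_mul_left]
            exact tsum_congr fun j => by ring
          rw [heq]
          have ht0 : (0:ℝ) ≤ ∑' j : ℕ, ((j:ℝ)+1)^2 * (1/2:ℝ)^j :=
            tsum_nonneg fun j => by positivity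
          have := aux_tsum_le
          have hcm : c^2 = 4 * m^2 := by rw [hc_def]; ring
          nlinarith [sq_nonneg m]
  -- Cauchy-Schwarz
  set f : Ω → ℝ≥0∞ := Set.indicator A (fun _ => 1) with hf_def
  have hf : Measurable f := measurable_const.indicator hA
  have hpq : Real.HolderConjugate 2 2 := ⟨by norm_num, by norm_num, by norm_num⟩
  have hCS := ENNReal.lintegral_mul_le_Lp_mul_Lq μ hpq hf.aemeasurable hg.aemeasurable
  have h1 : ∫⁻ ω, (f * g) ω ∂μ = ∫⁻ ω in A, g ω ∂μ := by
    rw [← lintegral_indicator hA]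
    refine lintegral_congr fun ω => ?_
    by_cases h : ω ∈ A <;> simp [hf_def, Set.indicator, h]
  have h2 : ∫⁻ ω, f ω ^ (2:ℝ) ∂μ = μ A := by
    have hfp : ∀ ω, f ω ^ (2:ℝ) = f ω := by
      intro ω
      by_cases h : ω ∈ A <;>
        simp [hf_def, Set.indicator, h, ENNReal.zero_rpow_of_pos (by norm_num : (0:ℝ) < 2)]
    calc ∫⁻ ω, f ω ^ (2:ℝ) ∂μ = ∫⁻ ω, f ω ∂μ := lintegral_congr hfp
      _ = μ A := by rw [hf_def, lintegral_indicator hA]; simp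
  rw [h1, h2] at hCS
  have hCS2 : ∫⁻ ω in A, g ω ∂μ
      ≤ μ A ^ (1/2:ℝ) * ENNReal.ofReal (80 * m^2) ^ (1/2:ℝ) := by
    refine le_trans hCS (mul_le_mul_right ?_ _)
    exact ENNReal.rpow_le_rpow key (by norm_num)
  -- back to reals
  have hfin : μ A ^ (1/2:ℝ) * ENNReal.ofReal (80 * m^2) ^ (1/2:ℝ) ≠ ⊤ :=
    ENNReal.mul_ne_top (ENNReal.rpow_ne_top_of_nonneg (by norm_num) (measure_ne_top μ A))
      (ENNReal.rpow_ne_top_of_nonneg (by norm_num) ENNReal.ofReal_ne_top)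
  have hLHS : ∫ ω in A, Y ω ∂μ = (∫⁻ ω in A, g ω ∂μ).toReal := by
    rw [integral_eq_lintegral_of_nonneg_ae (ae_restrict_of_ae h0)
      hY.aestronglyMeasurable.restrict]
  have hreal : ∫ ω in A, Y ω ∂μ ≤ (μ A).toReal ^ (1/2:ℝ) * (80 * m^2) ^ (1/2:ℝ) := by
    rw [hLHS]
    calc (∫⁻ ω in A, g ω ∂μ).toReal
        ≤ (μ A ^ (1/2:ℝ) * ENNReal.ofReal (80 * m^2) ^ (1/2:ℝ)).toReal :=
          ENNReal.toReal_mono hfin hCS2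
      _ = (μ A).toReal ^ (1/2:ℝ) * (80 * m^2) ^ (1/2:ℝ) := by
          rw [ENNReal.toReal_mul, ← ENNReal.toReal_rpow, ← ENNReal.toReal_rpow,
            ENNReal.toReal_ofReal (by positivity)]
  have hsq : (80 * m^2 : ℝ) ^ (1/2:ℝ) ≤ 9 * m := by
    rw [← Real.sqrt_eq_rpow]
    have hle : Real.sqrt (80 * m^2) ≤ Real.sqrt (81 * m^2) :=
      Real.sqrt_le_sqrt (by nlinarith)
    have h81 : Real.sqrt (81 * m^2) = 9 * m := by
      rw [show (81:ℝ) * m^2 = (9*m)^2 by ring, Real.sqrt_sq (by positivity)]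
    linarith
  show (∫ ω in A, Y ω ∂μ) / m ≤ 9 * Real.sqrt ((μ A).toReal)
  rw [div_le_iff₀ hm]
  have hs0 : 0 ≤ Real.sqrt ((μ A).toReal) := Real.sqrt_nonneg _
  calc ∫ ω in A, Y ω ∂μ ≤ Real.sqrt ((μ A).toReal) * ((80 * m^2) ^ (1/2:ℝ)) := by
        rw [Real.sqrt_eq_rpow]; exact hreal
    _ ≤ Real.sqrt ((μ A).toReal) * (9 * m) := mul_le_mul_of_nonneg_left hsq hs0
    _ = 9 * Real.sqrt ((μ A).toReal) * m := by ring
end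

section
/- Let (ℱ_t)_{t≥0} be a filtration on a probability space, let T₁ and ζ be stopping times, let (η_t)_{t≥0} be a nonnegative progressively measurable process, and let c > 0 be a constant. Assume that the process M_t := exp(∫₀^t η_s ds)·1_{{T₁ > t}} is a martingale with respect to (ℱ_t), and that almost surely η_t ≥ c for all t with ζ > t. Then for every t₀ > 0, P( T₁ ≤ ζ ∧ t₀ ) ≥ (1 − e^{−c t₀}) · P( ζ > t₀ ). -/
open MeasureTheory ProbabilityTheory Filter Topology
open scoped ENNReal

/-- Lemma 9: if a stopping time `T₁` has random intensity `η_t` (formalized by the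
martingale property of `exp(∫₀ᵗ η_s ds)·1_{T₁ > t}`), and `η_t ≥ c` whenever `ζ > t`
for another stopping time `ζ`, then `P(T₁ ≤ ζ ∧ t₀) ≥ (1 − e^{−c t₀}) P(ζ > t₀)`. -/
theorem stopping_time_intensity_bound
    {Ω : Type} {m0 : MeasurableSpace Ω} (μ : Measure Ω) [IsProbabilityMeasure μ]
    (ℱ : Filtration ℝ m0)
    (T₁ ζ : Ω → ℝ) (hT₁ : IsStoppingTime ℱ (fun ω => (T₁ ω : WithTop ℝ)))
    (hζ : IsStoppingTime ℱ (fun ω => (ζ ω : WithTop ℝ)))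
    (η : ℝ → Ω → ℝ) (hη_prog : ProgMeasurable ℱ η) (hη_nonneg : ∀ t ω, 0 ≤ η t ω)
    (c : ℝ) (hc : 0 < c)
    (hmart : Martingale
      (fun t ω => Real.exp (∫ s in (0:ℝ)..t, η s ω)
        * Set.indicator {ω' | t < T₁ ω'} (fun _ => (1:ℝ)) ω) ℱ μ)
    (hbound : ∀ᵐ ω ∂μ, ∀ t : ℝ, 0 ≤ t → t < ζ ω → c ≤ η t ω)
    (t₀ : ℝ) (ht₀ : 0 < t₀) :
    (1 - Real.exp (-c * t₀)) * (μ {ω | t₀ < ζ ω}).toReal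
      ≤ (μ {ω | T₁ ω ≤ min (ζ ω) t₀}).toReal := by
  classical
  set M : ℝ → Ω → ℝ := fun t ω => Real.exp (∫ s in (0:ℝ)..t, η s ω)
      * Set.indicator {ω' | t < T₁ ω'} (fun _ => (1:ℝ)) ω with hMdef
  have hMint : ∀ t, Integrable (M t) μ := fun t => hmart.integrable t
  have hMnn : ∀ t ω, 0 ≤ M t ω := fun t ω =>
    mul_nonneg (Real.exp_pos _).le (Set.indicator_nonneg (fun _ _ => zero_le_one) ω)
  have hζ' : ∀ t : ℝ, MeasurableSet[ℱ t] {ω | ζ ω ≤ t} := fun t => by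
    simpa only [WithTop.coe_le_coe] using hζ t
  have hT₁' : ∀ t : ℝ, MeasurableSet[ℱ t] {ω | T₁ ω ≤ t} := fun t => by
    simpa only [WithTop.coe_le_coe] using hT₁ t
  have hζm : Measurable ζ := measurable_of_Iic fun x => ℱ.le x _ (hζ' x)
  have hT₁m : Measurable T₁ := measurable_of_Iic fun x => ℱ.le x _ (hT₁' x)
  have hTset : ∀ t : ℝ, MeasurableSet {ω' | t < T₁ ω'} := fun t =>
    measurableSet_lt measurable_const hT₁m
  -- integral of the indicator over a set
  have hind : ∀ (t : ℝ) (S : Set Ω), MeasurableSet S →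
      ∫ ω in S, Set.indicator {ω' | t < T₁ ω'} (fun _ => (1:ℝ)) ω ∂μ
        = (μ ({ω' | t < T₁ ω'} ∩ S)).toReal := by
    intro t S hS
    rw [integral_indicator (hTset t), setIntegral_const, measureReal_restrict_apply (hTset t), measureReal_def]
    simp
  -- joint measurability of the truncated kernel
  have hφ : ∀ r : ℝ, @Measurable (Ω × ℝ) ℝ ((ℱ r).prod (inferInstance : MeasurableSpace ℝ)) _
      (fun p : Ω × ℝ => η (min p.2 r) p.1) := by
    intro r
    have h1 : @Measurable (Ω × ℝ) (Set.Iic r × Ω) ((ℱ r).prod inferInstance)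
        (Subtype.instMeasurableSpace.prod (ℱ r))
        (fun p => (⟨min p.2 r, Set.mem_Iic.mpr (min_le_right _ _)⟩, p.1)) := by
      refine Measurable.prodMk (Measurable.subtype_mk ?_) measurable_fst
      exact Measurable.min measurable_snd measurable_const
    exact ((hη_prog r).measurable).comp h1
  have hsec : ∀ ω, Measurable (fun s : ℝ => η (min s t₀) ω) := by
    intro ω
    exact (hφ t₀).comp (measurable_const.prodMk measurable_id)
  -- the bad set of non-integrability of η on [0, t₀]
  set F : Ω → ℝ≥0∞ := fun ω => ∫⁻ s in Set.Ioc (0:ℝ) t₀,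
      ENNReal.ofReal (η (min s t₀) ω) ∂volume with hFdef
  have hFmeas : Measurable[ℱ t₀] F := by
    have h2 : @Measurable (Ω × ℝ) ℝ≥0∞ ((ℱ t₀).prod (inferInstance : MeasurableSpace ℝ)) _
        (fun p : Ω × ℝ => ENNReal.ofReal (η (min p.2 t₀) p.1)) :=
      ENNReal.measurable_ofReal.comp (hφ t₀)
    exact @Measurable.lintegral_prod_right' Ω ℝ (ℱ t₀) _ (volume.restrict (Set.Ioc (0:ℝ) t₀)) _ _ h2
  set Pbad : Set Ω := {ω | F ω = ∞} with hPdef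
  have hPF : MeasurableSet[ℱ t₀] Pbad := hFmeas (measurableSet_singleton ∞)
  have hPm0 : MeasurableSet Pbad := ℱ.le t₀ _ hPF
  have hFnorm : ∀ ω, (∫⁻ s in Set.Ioc (0:ℝ) t₀, ‖η s ω‖ₑ ∂volume) = F ω := by
    intro ω
    refine lintegral_congr_ae ?_
    filter_upwards [ae_restrict_mem measurableSet_Ioc] with s hs
    rw [min_eq_left hs.2, Real.enorm_eq_ofReal (hη_nonneg s ω)]
  have hInt_of_not : ∀ ω, ω ∉ Pbad → IntervalIntegrable (fun s => η s ω) volume 0 t₀ := by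
    intro ω hω
    rw [intervalIntegrable_iff_integrableOn_Ioc_of_le ht₀.le]
    constructor
    · refine ((hsec ω).aestronglyMeasurable).congr ?_
      filter_upwards [ae_restrict_mem measurableSet_Ioc] with s hs
      rw [min_eq_left hs.2]
    · rw [hasFiniteIntegral_def, hFnorm ω]
      exact lt_top_iff_ne_top.mpr hω
  have hNotInt : ∀ ω ∈ Pbad, ∀ t, t₀ ≤ t → ¬ IntervalIntegrable (fun s => η s ω) volume 0 t := by
    intro ω hω t ht hInt
    have h2 : IntervalIntegrable (fun s => η s ω) volume 0 t₀ := by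
      refine hInt.mono_set ?_
      rw [Set.uIcc_of_le ht₀.le, Set.uIcc_of_le (ht₀.le.trans ht)]
      exact Set.Icc_subset_Icc le_rfl ht
    rw [intervalIntegrable_iff_integrableOn_Ioc_of_le ht₀.le] at h2
    have h3 := h2.2
    rw [hasFiniteIntegral_def, hFnorm ω] at h3
    exact absurd hω (by simpa using h3.ne : ¬ F ω = ∞)
  have hMP : ∀ t, t₀ ≤ t → ∀ ω ∈ Pbad,
      M t ω = Set.indicator {ω' | t < T₁ ω'} (fun _ => (1:ℝ)) ω := by
    intro t ht ω hω
    simp only [hMdef]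
    rw [intervalIntegral.integral_undef (hNotInt ω hω t ht), Real.exp_zero, one_mul]
  -- key null set lemma : on {T₁ > t₀} the kernel is a.e. integrable on [0, t₀]
  have hPT : ∀ t, t₀ ≤ t → μ ({ω | t < T₁ ω} ∩ Pbad) = μ ({ω | t₀ < T₁ ω} ∩ Pbad) := by
    intro t ht
    have h1 := hmart.setIntegral_eq ht hPF
    have e : ∀ u, t₀ ≤ u → ∫ ω in Pbad, M u ω ∂μ = (μ ({ω | u < T₁ ω} ∩ Pbad)).toReal := by
      intro u hu
      rw [setIntegral_congr_fun hPm0 (fun ω hω => hMP u hu ω hω)]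
      exact hind u Pbad hPm0
    have h2 : (μ ({ω | t₀ < T₁ ω} ∩ Pbad)).toReal = (μ ({ω | t < T₁ ω} ∩ Pbad)).toReal :=
      ((e t₀ le_rfl).symm.trans (h1.trans (e t ht)))
    exact ((ENNReal.toReal_eq_toReal_iff' (measure_ne_top μ _) (measure_ne_top μ _)).mp h2.symm)
  have hJ : μ ({ω | t₀ < T₁ ω} ∩ Pbad) = 0 := by
    have hs : ∀ n : ℕ, MeasurableSet ({ω | t₀ + (n:ℝ) < T₁ ω} ∩ Pbad) := fun n =>
      (hTset _).inter hPm0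
    have hanti : Antitone (fun n : ℕ => {ω | t₀ + (n:ℝ) < T₁ ω} ∩ Pbad) := by
      intro a b hab ω hω
      simp only [Set.mem_inter_iff, Set.mem_setOf_eq] at hω ⊢
      have : (a:ℝ) ≤ (b:ℝ) := Nat.cast_le.mpr hab
      exact ⟨by linarith [hω.1], hω.2⟩
    have hlim := tendsto_measure_iInter_atTop (μ := μ)
      (fun n => (hs n).nullMeasurableSet) hanti ⟨0, measure_ne_top μ _⟩
    have hempty : (⋂ n : ℕ, ({ω | t₀ + (n:ℝ) < T₁ ω} ∩ Pbad)) = ∅ := by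
      ext ω
      simp only [Set.mem_iInter, Set.mem_inter_iff, Set.mem_setOf_eq, Set.mem_empty_iff_false,
        iff_false, not_forall]
      obtain ⟨n, hn⟩ := exists_nat_gt (T₁ ω - t₀)
      exact ⟨n, fun h => absurd h.1 (by linarith)⟩
    rw [hempty, measure_empty] at hlim
    have hconst : (fun n : ℕ => μ ({ω | t₀ + (n:ℝ) < T₁ ω} ∩ Pbad))
        = fun _ : ℕ => μ ({ω | t₀ < T₁ ω} ∩ Pbad) := by
      funext n
      exact hPT (t₀ + n) (by linarith [Nat.cast_nonneg (α := ℝ) n])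
    have : Tendsto (fun _ : ℕ => μ ({ω | t₀ < T₁ ω} ∩ Pbad)) atTop (𝓝 0) := by
      have := hlim
      rwa [show (μ ∘ fun n : ℕ => ({ω | t₀ + (n:ℝ) < T₁ ω} ∩ Pbad))
          = fun _ : ℕ => μ ({ω | t₀ < T₁ ω} ∩ Pbad) from funext fun n => congrFun hconst n] at this
    exact tendsto_nhds_unique tendsto_const_nhds this
  -- dyadic approximations of ζ from above
  have h2p : ∀ n : ℕ, (0:ℝ) < 2 ^ n := fun n => by positivity
  set κ : ℕ → Ω → ℕ := fun n ω => ⌈ζ ω * 2 ^ n⌉₊ with hκdef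
  set σ : ℕ → Ω → ℝ := fun n ω => (κ n ω : ℝ) / 2 ^ n with hσdef
  have hσ_ge : ∀ n ω, ζ ω ≤ σ n ω := by
    intro n ω
    rw [hσdef, le_div_iff₀ (h2p n)]
    exact Nat.le_ceil _
  have hσ_nn : ∀ n ω, 0 ≤ σ n ω := fun n ω => by
    rw [hσdef]; positivity
  have hσ_le : ∀ n ω, σ n ω ≤ max (ζ ω) 0 + ((2:ℝ) ^ n)⁻¹ := by
    intro n ω
    rw [hσdef, div_le_iff₀ (h2p n)]
    have hmax : (max (ζ ω) 0 + ((2:ℝ) ^ n)⁻¹) * 2 ^ n = max (ζ ω) 0 * 2 ^ n + 1 := by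
      field_simp
    rw [hmax]
    by_cases h : ζ ω * 2 ^ n ≤ 0
    · have h0 : κ n ω = 0 := Nat.ceil_eq_zero.mpr h
      rw [h0]
      have : (0:ℝ) ≤ max (ζ ω) 0 * 2 ^ n := by positivity
      simpa using by linarith
    · push_neg at h
      have h1 : (κ n ω : ℝ) < ζ ω * 2 ^ n + 1 := Nat.ceil_lt_add_one h.le
      have h2 : ζ ω * 2 ^ n ≤ max (ζ ω) 0 * 2 ^ n := by
        have := le_max_left (ζ ω) 0
        nlinarith [h2p n]
      linarith
  have hσ_anti : ∀ ω, Antitone fun n => σ n ω := by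
    intro ω
    refine antitone_nat_of_succ_le fun n => ?_
    have hκ2 : (κ (n+1) ω : ℝ) ≤ 2 * κ n ω := by
      have : κ (n+1) ω ≤ 2 * κ n ω := by
        rw [hκdef]
        refine Nat.ceil_le.mpr ?_
        push_cast
        have := Nat.le_ceil (ζ ω * 2 ^ n)
        have hrw : ζ ω * 2 ^ (n+1) = (ζ ω * 2 ^ n) * 2 := by ring
        rw [hrw]
        nlinarith
      exact_mod_cast this
    rw [hσdef]
    simp only
    rw [div_le_div_iff₀ (h2p (n+1)) (h2p n)]
    have hp : (2:ℝ) ^ (n+1) = 2 ^ n * 2 := by ring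
    nlinarith [h2p n, (Nat.cast_nonneg (κ n ω) : (0:ℝ) ≤ (κ n ω : ℝ))]
  have hκmeas : ∀ n, Measurable (κ n) := fun n =>
    (Nat.measurable_ceil).comp (hζm.mul_const _)
  have hσmeas : ∀ n, Measurable (σ n) := fun n =>
    ((measurable_from_top (f := fun k : ℕ => (k:ℝ))).comp (hκmeas n)).div_const _
  -- the main sets
  set A : Set Ω := {ω | t₀ ≤ ζ ω} with hAdef
  set X : Set Ω := A ∩ {ω | t₀ < T₁ ω} with hXdef
  set B : ℕ → Set Ω := fun n => {ω | t₀ ≤ σ n ω} with hBdef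
  set C : ℕ → Set Ω := fun n => {ω | (0 < T₁ ω ∧ T₁ ω ≤ σ n ω) ∧ ζ ω < t₀} with hCdef
  set Cl : Set Ω := {ω | (0 < T₁ ω ∧ T₁ ω ≤ ζ ω) ∧ ζ ω < t₀} with hCldef
  have hAmeas : MeasurableSet A := measurableSet_le measurable_const hζm
  have hXmeas : MeasurableSet X := hAmeas.inter (hTset t₀)
  have hBmeas : ∀ n, MeasurableSet (B n) := fun n => measurableSet_le measurable_const (hσmeas n)
  have hCmeas : ∀ n, MeasurableSet (C n) := fun n =>
    (((measurableSet_lt measurable_const hT₁m).inter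
      (measurableSet_le hT₁m (hσmeas n))).inter (measurableSet_lt hζm measurable_const))
  have hClmeas : MeasurableSet Cl :=
    (((measurableSet_lt measurable_const hT₁m).inter
      (measurableSet_le hT₁m hζm)).inter (measurableSet_lt hζm measurable_const))
  -- the key inequality for each n
  have key : ∀ n : ℕ, Real.exp (c * t₀) * (μ X).toReal
      ≤ (μ (B n)).toReal + (μ (C n)).toReal := by
    intro n
    set v : ℕ → ℝ := fun k => (k:ℝ) / 2 ^ n with hvdef
    have hvnn : ∀ k, 0 ≤ v k := fun k => by rw [hvdef]; positivity
    set D : ℕ → Set Ω := fun k => {ω | κ n ω = k} ∩ {_ω | v k < t₀} with hDdef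
    have hDF : ∀ k, MeasurableSet[ℱ (v k)] (D k) := by
      intro k
      refine MeasurableSet.inter ?_ (MeasurableSet.const _)
      rcases k with _ | k
      · have : {ω | κ n ω = 0} = {ω | ζ ω ≤ 0} := by
          ext ω
          simp only [hκdef, Set.mem_setOf_eq, Nat.ceil_eq_zero]
          constructor
          · intro h; nlinarith [h2p n]
          · intro h; nlinarith [h2p n]
        rw [this]
        have h0 : MeasurableSet[ℱ (0:ℝ)] {ω | ζ ω ≤ 0} := hζ' 0
        exact ℱ.mono (by simpa [hvdef] using le_rfl) _ h0
      · have hset : {ω | κ n ω = k + 1} = {ω | ζ ω ≤ v (k+1)} \ {ω | ζ ω ≤ v k} := by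
          ext ω
          simp only [hκdef, hvdef, Set.mem_setOf_eq, Set.mem_diff, not_le]
          rw [Nat.ceil_eq_iff (Nat.succ_ne_zero k)]
          push_cast
          rw [div_lt_iff₀ (h2p n), le_div_iff₀ (h2p n)]
          constructor
          · rintro ⟨h1, h2⟩; exact ⟨h2, by linarith⟩
          · rintro ⟨h1, h2⟩; exact ⟨by linarith, h1⟩
        rw [hset]
        have hle : v k ≤ v (k+1) := by
          refine div_le_div_of_nonneg_right ?_ (h2p n).le
          exact_mod_cast Nat.le_succ k
        exact (hζ' (v (k+1))).diff (ℱ.mono hle _ (hζ' (v k)))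
    have hDm0 : ∀ k, MeasurableSet (D k) := fun k => ℱ.le _ _ (hDF k)
    have hdisj : Pairwise (Function.onFun Disjoint D) := by
      intro i j hij
      refine Set.disjoint_left.mpr fun ω hωi hωj => hij ?_
      exact hωi.1.symm.trans hωj.1
    have hBc : (B n)ᶜ = ⋃ k, D k := by
      ext ω
      simp only [hBdef, Set.mem_compl_iff, Set.mem_setOf_eq, not_le, Set.mem_iUnion, hDdef,
        Set.mem_inter_iff]
      constructor
      · intro h
        refine ⟨κ n ω, rfl, ?_⟩
        simpa [hσdef, hvdef] using h
      · rintro ⟨k, hk, hlt⟩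
        have hσv : σ n ω = v k := by simp only [hσdef, hvdef, hk]
        simp only [hσdef, hvdef, hk] at hσv ⊢
        simpa [hvdef] using hlt
    have hBmeas' : MeasurableSet (B n) := hBmeas n
    have hsplit := integral_add_compl hBmeas' (hMint t₀)
    have hM0 : ∫ ω, M 0 ω ∂μ = (μ {ω' | (0:ℝ) < T₁ ω'}).toReal := by
      have heq : ∀ ω, M 0 ω = Set.indicator {ω' | (0:ℝ) < T₁ ω'} (fun _ => (1:ℝ)) ω := by
        intro ω
        simp only [hMdef]
        rw [intervalIntegral.integral_same, Real.exp_zero, one_mul]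
      simp only [heq]
      have h := hind 0 Set.univ MeasurableSet.univ
      rw [Measure.restrict_univ, Set.inter_univ] at h
      exact h
    have hMt₀ : ∫ ω, M t₀ ω ∂μ = (μ {ω' | (0:ℝ) < T₁ ω'}).toReal := by
      have h := hmart.setIntegral_eq ht₀.le
        (show MeasurableSet[ℱ (0:ℝ)] Set.univ from MeasurableSet.univ)
      rw [Measure.restrict_univ] at h
      rw [← h]
      exact hM0
    have hXB : X ⊆ B n := fun ω hω => le_trans hω.1 (hσ_ge n ω)
    have hPae : ∀ᵐ ω ∂μ, ω ∉ {ω | t₀ < T₁ ω} ∩ Pbad := by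
      rw [ae_iff]
      simp only [not_not, Set.setOf_mem_eq]
      exact hJ
    have hgood : ∀ᵐ ω ∂μ, Set.indicator X (fun _ => Real.exp (c * t₀)) ω ≤ M t₀ ω := by
      filter_upwards [hbound, hPae] with ω hb hP
      by_cases hX : ω ∈ X
      · have hT : t₀ < T₁ ω := hX.2
        have hωP : ω ∉ Pbad := fun h => hP ⟨hT, h⟩
        have hII : IntervalIntegrable (fun s => η s ω) volume 0 t₀ := hInt_of_not ω hωP
        have hae : (fun _ : ℝ => c) ≤ᵐ[volume.restrict (Set.Icc (0:ℝ) t₀)] fun s => η s ω := by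
          have h1 : ∀ᵐ s ∂(volume.restrict (Set.Icc (0:ℝ) t₀)), s ∈ Set.Icc (0:ℝ) t₀ :=
            ae_restrict_mem measurableSet_Icc
          have h2 : ∀ᵐ s : ℝ ∂volume, s ≠ t₀ := by
            rw [ae_iff]
            simpa [not_not, Set.setOf_eq_eq_singleton] using Real.volume_singleton
          filter_upwards [h1, ae_restrict_of_ae h2] with s hs hne
          exact hb s hs.1 (lt_of_lt_of_le (lt_of_le_of_ne hs.2 hne) hX.1)
        have hle : c * t₀ ≤ ∫ s in (0:ℝ)..t₀, η s ω := by
          have hmono := intervalIntegral.integral_mono_ae_restrict ht₀.le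
            intervalIntegrable_const hII hae
          rw [intervalIntegral.integral_const, smul_eq_mul, sub_zero] at hmono
          linarith
        rw [Set.indicator_of_mem hX]
        have hM : M t₀ ω = Real.exp (∫ s in (0:ℝ)..t₀, η s ω) := by
          simp only [hMdef]
          have hmem : ω ∈ {ω' | t₀ < T₁ ω'} := hT
          rw [Set.indicator_of_mem hmem (fun _ => (1:ℝ)), mul_one]
        rw [hM]
        exact Real.exp_le_exp.mpr hle
      · rw [Set.indicator_of_notMem hX]
        exact hMnn t₀ ω
    have hBlow : Real.exp (c * t₀) * (μ X).toReal ≤ ∫ ω in B n, M t₀ ω ∂μ := by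
      have hiind : Integrable (Set.indicator X fun _ => Real.exp (c * t₀)) μ :=
        (integrable_const _).indicator hXmeas
      have hmono := integral_mono_ae (hiind.restrict (s := B n)) ((hMint t₀).restrict)
        (ae_restrict_of_ae hgood)
      have hLHS : ∫ ω in B n, Set.indicator X (fun _ => Real.exp (c * t₀)) ω ∂μ
          = Real.exp (c * t₀) * (μ X).toReal := by
        rw [integral_indicator hXmeas, setIntegral_const, measureReal_restrict_apply hXmeas,
          Set.inter_eq_left.mpr hXB, smul_eq_mul, mul_comm, measureReal_def]
      rw [← hLHS]
      exact hmono
    have hterm : ∀ k, (μ ({ω' | v k < T₁ ω'} ∩ D k)).toReal ≤ ∫ ω in D k, M t₀ ω ∂μ := by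
      intro k
      by_cases hk : v k < t₀
      · have heq : ∫ ω in D k, M t₀ ω ∂μ = ∫ ω in D k, M (v k) ω ∂μ :=
          (hmart.setIntegral_eq hk.le (hDF k)).symm
        rw [heq]
        have hptw : ∀ ω ∈ D k,
            Set.indicator {ω' | v k < T₁ ω'} (fun _ => (1:ℝ)) ω ≤ M (v k) ω := by
          intro ω _
          have h1 : (0:ℝ) ≤ ∫ s in (0:ℝ)..(v k), η s ω :=
            intervalIntegral.integral_nonneg (hvnn k) (fun u _ => hη_nonneg u ω)
          have h2 : (1:ℝ) ≤ Real.exp (∫ s in (0:ℝ)..(v k), η s ω) := Real.one_le_exp h1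
          have h3 : (0:ℝ) ≤ Set.indicator {ω' | v k < T₁ ω'} (fun _ => (1:ℝ)) ω :=
            Set.indicator_nonneg (fun _ _ => zero_le_one) ω
          calc Set.indicator {ω' | v k < T₁ ω'} (fun _ => (1:ℝ)) ω
              = 1 * Set.indicator {ω' | v k < T₁ ω'} (fun _ => (1:ℝ)) ω := (one_mul _).symm
            _ ≤ M (v k) ω := by
                simp only [hMdef]
                exact mul_le_mul_of_nonneg_right h2 h3
        have hmono := setIntegral_mono_on
          (((integrable_const (1:ℝ)).indicator (hTset (v k))).integrableOn)
          ((hMint (v k)).integrableOn) (hDm0 k) hptw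
        calc (μ ({ω' | v k < T₁ ω'} ∩ D k)).toReal
            = ∫ ω in D k, Set.indicator {ω' | v k < T₁ ω'} (fun _ => (1:ℝ)) ω ∂μ :=
              (hind (v k) (D k) (hDm0 k)).symm
          _ ≤ _ := hmono
      · have hDk : D k = ∅ := by
          ext ω
          simp [hDdef, hk]
        simp [hDk]
    have hGm : ∀ k, MeasurableSet ({ω' | v k < T₁ ω'} ∩ D k) := fun k =>
      (hTset _).inter (hDm0 k)
    have hGdisj : Pairwise (Function.onFun Disjoint fun k => {ω' | v k < T₁ ω'} ∩ D k) := fun i j hij =>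
      ((hdisj hij).mono Set.inter_subset_right Set.inter_subset_right)
    have hGunion : (⋃ k, ({ω' | v k < T₁ ω'} ∩ D k)) = {ω | σ n ω < t₀ ∧ σ n ω < T₁ ω} := by
      ext ω
      simp only [Set.mem_iUnion, Set.mem_inter_iff, Set.mem_setOf_eq, hDdef]
      constructor
      · rintro ⟨k, hT, hk, hkt⟩
        have hσv : σ n ω = v k := by simp only [hσdef, hvdef, hk]
        rw [hσv]
        exact ⟨hkt, hT⟩
      · rintro ⟨h1, h2⟩
        have hσv : σ n ω = v (κ n ω) := by simp only [hσdef, hvdef]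
        rw [hσv] at h1 h2
        exact ⟨κ n ω, h2, rfl, h1⟩
    have hsum1 : HasSum (fun k => ∫ ω in D k, M t₀ ω ∂μ) (∫ ω in (B n)ᶜ, M t₀ ω ∂μ) := by
      rw [hBc]
      exact hasSum_integral_iUnion hDm0 hdisj ((hMint t₀).integrableOn)
    have hmeasU := measure_iUnion (μ := μ) hGdisj hGm
    have hsumG : Summable (fun k => (μ ({ω' | v k < T₁ ω'} ∩ D k)).toReal) :=
      ENNReal.summable_toReal (by rw [← hmeasU]; exact measure_ne_top μ _)
    have htsumG : ∑' k, (μ ({ω' | v k < T₁ ω'} ∩ D k)).toReal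
        = (μ {ω | σ n ω < t₀ ∧ σ n ω < T₁ ω}).toReal := by
      rw [← hGunion, hmeasU, ENNReal.tsum_toReal_eq (fun k => measure_ne_top μ _)]
    have hcompl_ge : (μ {ω | σ n ω < t₀ ∧ σ n ω < T₁ ω}).toReal
        ≤ ∫ ω in (B n)ᶜ, M t₀ ω ∂μ := by
      rw [← htsumG, ← hsum1.tsum_eq]
      exact hsumG.tsum_le_tsum hterm hsum1.summable
    have hcover : {ω' | (0:ℝ) < T₁ ω'} ⊆ B n ∪ C n ∪ {ω | σ n ω < t₀ ∧ σ n ω < T₁ ω} := by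
      intro ω hω
      by_cases h1 : t₀ ≤ σ n ω
      · exact Or.inl (Or.inl h1)
      · push_neg at h1
        by_cases h2 : T₁ ω ≤ σ n ω
        · exact Or.inl (Or.inr ⟨⟨hω, h2⟩, lt_of_le_of_lt (hσ_ge n ω) h1⟩)
        · push_neg at h2
          exact Or.inr ⟨h1, h2⟩
    have hcov2 : (μ {ω' | (0:ℝ) < T₁ ω'}).toReal
        ≤ (μ (B n)).toReal + (μ (C n)).toReal
          + (μ {ω | σ n ω < t₀ ∧ σ n ω < T₁ ω}).toReal := by
      have h1 : μ {ω' | (0:ℝ) < T₁ ω'}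
          ≤ μ (B n) + μ (C n) + μ {ω | σ n ω < t₀ ∧ σ n ω < T₁ ω} :=
        le_trans (measure_mono hcover) (le_trans (measure_union_le _ _)
          (add_le_add_left (measure_union_le _ _) _))
      have hfin : μ (B n) + μ (C n) + μ {ω | σ n ω < t₀ ∧ σ n ω < T₁ ω} ≠ ∞ :=
        ENNReal.add_ne_top.mpr ⟨ENNReal.add_ne_top.mpr
          ⟨measure_ne_top μ _, measure_ne_top μ _⟩, measure_ne_top μ _⟩
      have h2 := ENNReal.toReal_mono hfin h1
      rwa [ENNReal.toReal_add (ENNReal.add_ne_top.mpr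
          ⟨measure_ne_top μ _, measure_ne_top μ _⟩) (measure_ne_top μ _),
        ENNReal.toReal_add (measure_ne_top μ _) (measure_ne_top μ _)] at h2
    have hXG : Real.exp (c * t₀) * (μ X).toReal + (μ {ω | σ n ω < t₀ ∧ σ n ω < T₁ ω}).toReal
        ≤ (μ {ω' | (0:ℝ) < T₁ ω'}).toReal := by
      rw [← hMt₀, ← hsplit]
      exact add_le_add hBlow hcompl_ge
    linarith
  -- pass to the limit in n
  have hBanti : Antitone B := fun a b hab ω hω => le_trans hω ((hσ_anti ω) hab)
  have hCanti : Antitone C := fun a b hab ω hω =>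
    ⟨⟨hω.1.1, le_trans hω.1.2 ((hσ_anti ω) hab)⟩, hω.2⟩
  have hmax_lim : ∀ (ω : Ω) (r : ℝ), (∀ n, r ≤ σ n ω) → r ≤ max (ζ ω) 0 := by
    intro ω r h
    have h2 : Tendsto (fun n : ℕ => ((2:ℝ) ^ n)⁻¹) atTop (𝓝 0) := by
      have := tendsto_pow_atTop_nhds_zero_of_lt_one
        (by norm_num : (0:ℝ) ≤ 2⁻¹) (by norm_num : (2:ℝ)⁻¹ < 1)
      simpa [inv_pow] using this
    have hlim : Tendsto (fun n : ℕ => max (ζ ω) 0 + ((2:ℝ) ^ n)⁻¹) atTop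
        (𝓝 (max (ζ ω) 0)) := by
      simpa using tendsto_const_nhds.add h2
    exact ge_of_tendsto' hlim (fun n => le_trans (h n) (hσ_le n ω))
  have hiB : (⋂ n, B n) ⊆ A := by
    intro ω hω
    simp only [Set.mem_iInter] at hω
    have h1 : t₀ ≤ max (ζ ω) 0 := hmax_lim ω t₀ (fun n => hω n)
    rcases le_or_gt (ζ ω) 0 with h | h
    · exfalso
      rw [max_eq_right h] at h1
      linarith
    · rwa [max_eq_left h.le] at h1
  have hiC : (⋂ n, C n) ⊆ Cl := by
    intro ω hω
    simp only [Set.mem_iInter] at hω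
    have h0 : 0 < T₁ ω := (hω 0).1.1
    have h1 : T₁ ω ≤ max (ζ ω) 0 := hmax_lim ω _ (fun n => (hω n).1.2)
    rcases le_or_gt (ζ ω) 0 with h | h
    · exfalso
      rw [max_eq_right h] at h1
      linarith
    · rw [max_eq_left h.le] at h1
      exact ⟨⟨h0, h1⟩, (hω 0).2⟩
  have hBtend : Tendsto (fun n => (μ (B n)).toReal) atTop (𝓝 ((μ (⋂ n, B n)).toReal)) := by
    have h := tendsto_measure_iInter_atTop (μ := μ) (fun n => (hBmeas n).nullMeasurableSet)
      hBanti ⟨0, measure_ne_top μ _⟩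
    exact (ENNReal.tendsto_toReal (measure_ne_top μ _)).comp h
  have hCtend : Tendsto (fun n => (μ (C n)).toReal) atTop (𝓝 ((μ (⋂ n, C n)).toReal)) := by
    have h := tendsto_measure_iInter_atTop (μ := μ) (fun n => (hCmeas n).nullMeasurableSet)
      hCanti ⟨0, measure_ne_top μ _⟩
    exact (ENNReal.tendsto_toReal (measure_ne_top μ _)).comp h
  have hlim2 : Real.exp (c * t₀) * (μ X).toReal ≤ (μ A).toReal + (μ Cl).toReal := by
    have hsum := hBtend.add hCtend
    have h1 := ge_of_tendsto' hsum key
    refine le_trans h1 (add_le_add ?_ ?_)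
    · exact ENNReal.toReal_mono (measure_ne_top μ _) (measure_mono hiB)
    · exact ENNReal.toReal_mono (measure_ne_top μ _) (measure_mono hiC)
  -- final arithmetic
  have hm1meas : MeasurableSet (A ∩ {ω | T₁ ω ≤ t₀}) :=
    hAmeas.inter (measurableSet_le hT₁m measurable_const)
  have hAsub : A ⊆ (A ∩ {ω | T₁ ω ≤ t₀}) ∪ X := by
    intro ω hω
    rcases le_or_gt (T₁ ω) t₀ with h | h
    · exact Or.inl ⟨hω, h⟩
    · exact Or.inr ⟨hω, h⟩
  have ha_le : (μ A).toReal ≤ (μ (A ∩ {ω | T₁ ω ≤ t₀})).toReal + (μ X).toReal := by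
    have h1 : μ A ≤ μ (A ∩ {ω | T₁ ω ≤ t₀}) + μ X :=
      le_trans (measure_mono hAsub) (measure_union_le _ _)
    have h2 := ENNReal.toReal_mono
      (ENNReal.add_ne_top.mpr ⟨measure_ne_top μ _, measure_ne_top μ _⟩) h1
    rwa [ENNReal.toReal_add (measure_ne_top μ _) (measure_ne_top μ _)] at h2
  have htarget : (μ (A ∩ {ω | T₁ ω ≤ t₀})).toReal + (μ Cl).toReal
      ≤ (μ {ω | T₁ ω ≤ min (ζ ω) t₀}).toReal := by
    have hdisj2 : Disjoint (A ∩ {ω | T₁ ω ≤ t₀}) Cl := by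
      refine Set.disjoint_left.mpr fun ω h1 h2 => ?_
      have ha : t₀ ≤ ζ ω := h1.1
      have hb2 : ζ ω < t₀ := h2.2
      linarith
    have hsub : (A ∩ {ω | T₁ ω ≤ t₀}) ∪ Cl ⊆ {ω | T₁ ω ≤ min (ζ ω) t₀} := by
      rintro ω (⟨h1, h2⟩ | ⟨⟨h1, h2⟩, h3⟩)
      · have h1' : t₀ ≤ ζ ω := h1
        have h2' : T₁ ω ≤ t₀ := h2
        show T₁ ω ≤ min (ζ ω) t₀
        exact le_min (le_trans h2' h1') h2'
      · have h2' : T₁ ω ≤ ζ ω := h2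
        have h3' : ζ ω < t₀ := h3
        show T₁ ω ≤ min (ζ ω) t₀
        exact le_min h2' (le_trans h2' h3'.le)
    have h1 : μ (A ∩ {ω | T₁ ω ≤ t₀}) + μ Cl = μ ((A ∩ {ω | T₁ ω ≤ t₀}) ∪ Cl) :=
      (measure_union hdisj2 hClmeas).symm
    have h2 : μ ((A ∩ {ω | T₁ ω ≤ t₀}) ∪ Cl) ≤ μ {ω | T₁ ω ≤ min (ζ ω) t₀} :=
      measure_mono hsub
    have h3 := ENNReal.toReal_mono (measure_ne_top μ _) (h1 ▸ h2)
    rwa [ENNReal.toReal_add (measure_ne_top μ _) (measure_ne_top μ _)] at h3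
  have hζA : (μ {ω | t₀ < ζ ω}).toReal ≤ (μ A).toReal :=
    ENNReal.toReal_mono (measure_ne_top μ _) (measure_mono (by
      intro ω h
      show t₀ ≤ ζ ω
      exact le_of_lt h))
  have hE : Real.exp (-c * t₀) * Real.exp (c * t₀) = 1 := by
    rw [← Real.exp_add]
    ring_nf
    exact Real.exp_zero
  have hE1 : Real.exp (-c * t₀) ≤ 1 := by
    have h := Real.exp_le_exp.mpr (show -c * t₀ ≤ 0 by nlinarith)
    simpa using h
  have hxle : (μ X).toReal ≤ Real.exp (-c * t₀) * (μ A).toReal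
      + Real.exp (-c * t₀) * (μ Cl).toReal := by
    have h := mul_le_mul_of_nonneg_left hlim2 (Real.exp_nonneg (-c * t₀))
    calc (μ X).toReal = (Real.exp (-c * t₀) * Real.exp (c * t₀)) * (μ X).toReal := by
          rw [hE, one_mul]
      _ = Real.exp (-c * t₀) * (Real.exp (c * t₀) * (μ X).toReal) := by ring
      _ ≤ Real.exp (-c * t₀) * ((μ A).toReal + (μ Cl).toReal) := h
      _ = _ := by ring
  have hγ : Real.exp (-c * t₀) * (μ Cl).toReal ≤ (μ Cl).toReal := by
    have hγnn : (0:ℝ) ≤ (μ Cl).toReal := ENNReal.toReal_nonneg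
    nlinarith
  have hzle : (1 - Real.exp (-c * t₀)) * (μ {ω | t₀ < ζ ω}).toReal
      ≤ (1 - Real.exp (-c * t₀)) * (μ A).toReal :=
    mul_le_mul_of_nonneg_left hζA (by linarith)
  have h7 : (1 - Real.exp (-c * t₀)) * (μ A).toReal
      = (μ A).toReal - Real.exp (-c * t₀) * (μ A).toReal := by ring
  linarith
end

section
/- Let A and B be nonnegative random variables on a common probability space with A integrable, and let a₀ > 0 satisfy E[ A·1_{{A > a₀}} ] ≤ E A − E[ min(A,B) ]. Then P( B < A ) ≥ P( A > a₀ ). -/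
open MeasureTheory ProbabilityTheory

/-- The extremal fact used in Lemma 8's proof: if `A, B ≥ 0`, `A` is integrable and
`E[A·1_{A > a₀}] ≤ E A − E[min(A,B)]`, then `P(B < A) ≥ P(A > a₀)`. -/
theorem prob_lt_ge_of_truncated_mean
    {Ω : Type} [MeasurableSpace Ω] (μ : Measure Ω) [IsProbabilityMeasure μ]
    (A B : Ω → ℝ) (hAmeas : Measurable A) (hBmeas : Measurable B)
    (hA : ∀ ω, 0 ≤ A ω) (hB : ∀ ω, 0 ≤ B ω)
    (hAint : Integrable A μ)
    (a₀ : ℝ) (ha₀ : 0 < a₀)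
    (hconstraint : (∫ ω in {ω | a₀ < A ω}, A ω ∂μ)
      ≤ (∫ ω, A ω ∂μ) - ∫ ω, min (A ω) (B ω) ∂μ) :
    (μ {ω | a₀ < A ω}).toReal ≤ (μ {ω | B ω < A ω}).toReal := by
  set S := {ω | a₀ < A ω} with hSdef
  set T := {ω | B ω < A ω} with hTdef
  have hSm : MeasurableSet S := measurableSet_lt measurable_const hAmeas
  have hTm : MeasurableSet T := measurableSet_lt hBmeas hAmeas
  set f : Ω → ℝ := fun ω => A ω - min (A ω) (B ω) with hfdef
  have hminmeas : Measurable (fun ω => min (A ω) (B ω)) := hAmeas.min hBmeas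
  have hminint : Integrable (fun ω => min (A ω) (B ω)) μ := by
    refine hAint.mono hminmeas.aestronglyMeasurable (ae_of_all _ fun ω => ?_)
    rw [Real.norm_eq_abs, Real.norm_eq_abs, abs_of_nonneg (le_min (hA ω) (hB ω)),
      abs_of_nonneg (hA ω)]
    exact min_le_left _ _
  have hfint : Integrable f μ := hAint.sub hminint
  have hfnonneg : ∀ ω, 0 ≤ f ω := fun ω => sub_nonneg.2 (min_le_left _ _)
  have hfleA : ∀ ω, f ω ≤ A ω := fun ω => by
    simpa [hfdef] using le_min (hA ω) (hB ω)
  -- f vanishes off T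
  have hfzero : ∀ ω ∈ Tᶜ, f ω = 0 := by
    intro ω hω
    have : A ω ≤ B ω := not_lt.1 hω
    simp [hfdef, min_eq_left this]
  -- total integral of f
  have hIf : ∫ ω, f ω ∂μ = (∫ ω, A ω ∂μ) - ∫ ω, min (A ω) (B ω) ∂μ :=
    integral_sub hAint hminint
  -- ∫ f = ∫_{T} f
  have hIfT : ∫ ω, f ω ∂μ = ∫ ω in T, f ω ∂μ := by
    have h1 : (∫ ω in T, f ω ∂μ) + ∫ ω in Tᶜ, f ω ∂μ = ∫ ω, f ω ∂μ :=
      integral_add_compl hTm hfint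
    have h2 : ∫ ω in Tᶜ, f ω ∂μ = 0 := by
      rw [setIntegral_congr_fun hTm.compl hfzero, integral_zero]
    linarith
  -- split ∫_T f
  have hsplitT : (∫ ω in T ∩ S, f ω ∂μ) + ∫ ω in T \ S, f ω ∂μ = ∫ ω in T, f ω ∂μ :=
    integral_inter_add_diff hSm hfint.integrableOn
  -- split ∫_S A
  have hsplitS : (∫ ω in S ∩ T, A ω ∂μ) + ∫ ω in S \ T, A ω ∂μ = ∫ ω in S, A ω ∂μ :=
    integral_inter_add_diff hTm hAint.integrableOn
  -- bound on T ∩ S : f ≤ A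
  have hb1 : ∫ ω in T ∩ S, f ω ∂μ ≤ ∫ ω in T ∩ S, A ω ∂μ :=
    setIntegral_mono_on hfint.integrableOn hAint.integrableOn (hTm.inter hSm)
      (fun ω _ => hfleA ω)
  -- bound on T \ S : f ≤ a₀
  have hb2 : ∫ ω in T \ S, f ω ∂μ ≤ a₀ * (μ (T \ S)).toReal := by
    have : ∫ ω in T \ S, f ω ∂μ ≤ ∫ _ω in T \ S, a₀ ∂μ := by
      refine setIntegral_mono_on hfint.integrableOn (integrableOn_const ?_)
        (hTm.diff hSm) (fun ω hω => ?_)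
      · exact (measure_lt_top _ _).ne
      · have hAle : A ω ≤ a₀ := not_lt.1 hω.2
        exact (hfleA ω).trans hAle
    rwa [setIntegral_const, smul_eq_mul, mul_comm] at this
  -- bound on S \ T : a₀ ≤ A
  have hb3 : a₀ * (μ (S \ T)).toReal ≤ ∫ ω in S \ T, A ω ∂μ := by
    have : ∫ _ω in S \ T, a₀ ∂μ ≤ ∫ ω in S \ T, A ω ∂μ := by
      refine setIntegral_mono_on (integrableOn_const ?_) hAint.integrableOn
        (hSm.diff hTm) (fun ω hω => ?_)
      · exact (measure_lt_top _ _).ne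
      · exact (hω.1 : a₀ < A ω).le
    rwa [setIntegral_const, smul_eq_mul, mul_comm] at this
  -- T ∩ S integral of A equals S ∩ T
  have hcomm : ∫ ω in T ∩ S, A ω ∂μ = ∫ ω in S ∩ T, A ω ∂μ := by
    rw [Set.inter_comm]
  -- combine
  have hkey : (μ (S \ T)).toReal ≤ (μ (T \ S)).toReal := by
    have h : a₀ * (μ (S \ T)).toReal ≤ a₀ * (μ (T \ S)).toReal := by
      have := hconstraint
      rw [← hIf, hIfT, ← hsplitT] at this
      linarith [hb1, hb2, hb3, hsplitS, hcomm]
    exact le_of_mul_le_mul_left h ha₀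
  have hmS : μ (S ∩ T) + μ (S \ T) = μ S := measure_inter_add_diff S hTm
  have hmT : μ (T ∩ S) + μ (T \ S) = μ T := measure_inter_add_diff T hSm
  have hfin : ∀ s : Set Ω, μ s ≠ ⊤ := fun s => (measure_lt_top μ s).ne
  have h1 : (μ S).toReal = (μ (S ∩ T)).toReal + (μ (S \ T)).toReal := by
    rw [← hmS, ENNReal.toReal_add (hfin _) (hfin _)]
  have h2 : (μ T).toReal = (μ (T ∩ S)).toReal + (μ (T \ S)).toReal := by
    rw [← hmT, ENNReal.toReal_add (hfin _) (hfin _)]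
  rw [h1, h2, Set.inter_comm T S]
  linarith
end

section
/- For k ≥ 1 define F_k(s) := E[ ( max(0, s − Σ_{i=1}^k U_i) )² ], where U₁,…,U_k are i.i.d. Uniform(0,1). Let 0 < a < b, let λ₁,…,λ_k > 0 be arbitrary, and let V₁,…,V_k be independent random variables where V_i is distributed as an Exponential random variable of rate λ_i conditioned to lie in [a,b]. Then for arbitrary v₁,…,v_k ∈ [a,b], E[ ( max(0, Σ_{i=1}^k v_i − Σ_{i=1}^k V_i) )² ] ≥ (b−a)² · F_k( Σ_{i=1}^k (v_i − a)/(b−a) ). -/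
open MeasureTheory ProbabilityTheory

/-- `F_k(s) := E[(max(0, s − Σ_{i=1}^k U_i))²]` for i.i.d. Uniform(0,1) variables `U_i`. -/
noncomputable def uniformShortfallSq (k : ℕ) (s : ℝ) : ℝ :=
  ∫ u : Fin k → ℝ, (max 0 (s - ∑ i, u i)) ^ 2
    ∂(Measure.pi fun _ : Fin k => volume.restrict (Set.Icc (0:ℝ) 1))

section CondExpAuxSec
open Real Set

namespace CondExpAux

/-- The quantile map sending Uniform(0,1) to Exp(c) conditioned on [a,b]. -/
noncomputable def psi (c a b u : ℝ) : ℝ :=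
  -(1/c) * Real.log ((1-u) * Real.exp (-(c*a)) + u * Real.exp (-(c*b)))

lemma measurable_psi (c a b : ℝ) : Measurable (psi c a b) := by
  unfold psi
  exact (((measurable_const.sub measurable_id).mul measurable_const).add
    (measurable_id.mul measurable_const)).log.const_mul _

variable {c a b : ℝ}

lemma expMeasure_apply {s : Set ℝ} (hs : MeasurableSet s) :
    expMeasure c s = ∫⁻ x in s, exponentialPDF c x := by
  rw [expMeasure, gammaMeasure, withDensity_apply _ hs]; rfl

lemma expMeasure_Iic (hc : 0 < c) (x : ℝ) :
    expMeasure c (Iic x) = ENNReal.ofReal (if 0 ≤ x then 1 - Real.exp (-(c*x)) else 0) := by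
  rw [expMeasure_apply measurableSet_Iic, lintegral_exponentialPDF_eq_antiDeriv hc]

lemma expMeasure_singleton (x : ℝ) : expMeasure c {x} = 0 := by
  rw [expMeasure_apply (measurableSet_singleton x)]
  simp [Measure.restrict_eq_zero.mpr (Real.volume_singleton)]

lemma expMeasure_Icc (hc : 0 < c) (ha : 0 ≤ a) (hab : a ≤ b) :
    expMeasure c (Icc a b) = ENNReal.ofReal (Real.exp (-(c*a)) - Real.exp (-(c*b))) := by
  have h1 : Icc a b = Ioc a b ∪ {a} := by
    ext x; simp only [mem_Icc, mem_Ioc, union_singleton, mem_insert_iff]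
    constructor
    · rintro ⟨h1, h2⟩; rcases eq_or_lt_of_le h1 with h | h
      · exact Or.inl h.symm
      · exact Or.inr ⟨h, h2⟩
    · rintro (rfl | ⟨h1, h2⟩) <;> constructor <;> linarith
  have h2 : expMeasure c (Ioc a b) = ENNReal.ofReal (Real.exp (-(c*a)) - Real.exp (-(c*b))) := by
    have : Ioc a b = Iic b \ Iic a := (Iic_sdiff_Iic).symm
    rw [this, measure_diff (Iic_subset_Iic.2 hab) nullMeasurableSet_Iic
        ((expMeasure_Iic hc a).trans_ne ENNReal.ofReal_ne_top), expMeasure_Iic hc,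
      expMeasure_Iic hc, if_pos ha, if_pos (ha.trans hab),
      ← ENNReal.ofReal_sub _ (by
        have : Real.exp (-(c*a)) ≤ 1 := Real.exp_le_one_iff.2 (by nlinarith)
        linarith)]
    congr 1; ring
  refine le_antisymm ?_ (h2 ▸ measure_mono Ioc_subset_Icc_self)
  calc expMeasure c (Icc a b) ≤ expMeasure c (Ioc a b) + expMeasure c {a} :=
        h1 ▸ measure_union_le _ _
    _ = ENNReal.ofReal (Real.exp (-(c*a)) - Real.exp (-(c*b))) := by
        rw [expMeasure_singleton, add_zero, h2]

lemma map_psi (hc : 0 < c) (ha : 0 < a) (hab : a < b) :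
    Measure.map (psi c a b) (volume.restrict (Icc (0:ℝ) 1))
      = (expMeasure c)[|Icc a b] := by
  have hA : (0:ℝ) < Real.exp (-(c*a)) := Real.exp_pos _
  have hB : (0:ℝ) < Real.exp (-(c*b)) := Real.exp_pos _
  have hBA : Real.exp (-(c*b)) < Real.exp (-(c*a)) := by
    apply Real.exp_lt_exp.2; nlinarith
  set A := Real.exp (-(c*a)) with hAdef
  set B := Real.exp (-(c*b)) with hBdef
  have hZ : expMeasure c (Icc a b) = ENNReal.ofReal (A - B) :=
    expMeasure_Icc hc ha.le hab.le
  haveI : IsProbabilityMeasure (volume.restrict (Icc (0:ℝ) 1)) := ⟨by simp⟩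
  haveI : IsProbabilityMeasure
      (Measure.map (psi c a b) (volume.restrict (Icc (0:ℝ) 1))) :=
    Measure.isProbabilityMeasure_map (measurable_psi c a b).aemeasurable
  refine Measure.ext_of_Iic _ _ (fun x => ?_)
  set t := (A - Real.exp (-(c*x))) / (A - B) with htdef
  have key : ∀ u : ℝ, 0 ≤ u → u ≤ 1 → (psi c a b u ≤ x ↔ u ≤ t) := by
    intro u h0 h1
    have hL : 0 < (1-u) * A + u * B := by nlinarith
    have hcc : c * (1/c) = 1 := mul_one_div_cancel hc.ne'
    have step1 : psi c a b u ≤ x ↔ -(c*x) ≤ Real.log ((1-u) * A + u * B) := by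
      rw [psi, ← hAdef, ← hBdef, neg_mul, neg_le, one_div_mul_eq_div,
        le_div_iff₀ hc]
      constructor <;> intro h <;> linarith
    rw [step1, Real.le_log_iff_exp_le hL, htdef, le_div_iff₀ (by linarith)]
    constructor <;> intro h <;> nlinarith
  have hset : psi c a b ⁻¹' Iic x ∩ Icc 0 1 = Icc 0 (min 1 t) := by
    ext u
    simp only [mem_inter_iff, mem_preimage, mem_Iic, mem_Icc, le_min_iff]
    constructor
    · rintro ⟨hpsi, h0, h1⟩
      exact ⟨h0, h1, (key u h0 h1).1 hpsi⟩
    · rintro ⟨h0, h1, ht⟩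
      exact ⟨(key u h0 h1).2 ht, h0, h1⟩
  rw [Measure.map_apply (measurable_psi c a b) measurableSet_Iic,
    Measure.restrict_apply ((measurable_psi c a b) measurableSet_Iic), hset,
    cond_apply measurableSet_Icc]
  have hinter : Icc a b ∩ Iic x = Icc a (min b x) := by
    ext y; simp only [mem_inter_iff, mem_Icc, mem_Iic, le_min_iff]; tauto
  rw [hinter, hZ]
  rcases lt_or_ge x a with hx | hx
  · have h1 : Icc a (min b x) = (∅ : Set ℝ) := by
      apply Icc_eq_empty; intro hcon
      have := hcon.trans (min_le_right b x); linarith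
    have h2 : t < 0 := by
      apply div_neg_of_neg_of_pos _ (by linarith)
      have : A < Real.exp (-(c*x)) := by apply Real.exp_lt_exp.2; nlinarith
      linarith
    rw [h1, measure_empty, mul_zero, Real.volume_Icc,
      ENNReal.ofReal_eq_zero.2 (by cases le_total 1 t with
        | inl h => linarith [min_le_right 1 t]
        | inr h => linarith [min_le_right 1 t])]
  · have hmba : a ≤ min b x := le_min hab.le hx
    rw [expMeasure_Icc hc ha.le hmba, Real.volume_Icc, sub_zero,
      ← ENNReal.div_eq_inv_mul, ← ENNReal.ofReal_div_of_pos (by linarith)]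
    congr 1
    rcases le_total x b with hxb | hxb
    · rw [min_eq_right hxb, htdef, min_eq_right]
      rw [div_le_one (by linarith)]
      have : B ≤ Real.exp (-(c*x)) := by apply Real.exp_le_exp.2; nlinarith
      linarith
    · rw [min_eq_left hxb, min_eq_left, div_self (by linarith)]
      rw [htdef, le_div_iff₀ (by linarith), one_mul]
      have : Real.exp (-(c*x)) ≤ B := by apply Real.exp_le_exp.2; nlinarith
      linarith

lemma psi_ge (hc : 0 < c) (hab : a < b) {u : ℝ} (h0 : 0 ≤ u) (h1 : u ≤ 1) :
    a ≤ psi c a b u := by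
  have hA : (0:ℝ) < Real.exp (-(c*a)) := Real.exp_pos _
  have hB : (0:ℝ) < Real.exp (-(c*b)) := Real.exp_pos _
  have hBA : Real.exp (-(c*b)) < Real.exp (-(c*a)) := by
    apply Real.exp_lt_exp.2; nlinarith
  have hL : 0 < (1-u) * Real.exp (-(c*a)) + u * Real.exp (-(c*b)) := by nlinarith
  have hlog : Real.log ((1-u) * Real.exp (-(c*a)) + u * Real.exp (-(c*b)))
      ≤ -(c*a) := by
    rw [Real.log_le_iff_le_exp hL]
    nlinarith
  rw [psi, neg_mul, le_neg, one_div_mul_eq_div, div_le_iff₀ hc]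
  nlinarith

lemma psi_le (hc : 0 < c) (hab : a < b) {u : ℝ} (h0 : 0 ≤ u) (h1 : u ≤ 1) :
    psi c a b u ≤ a + (b - a) * u := by
  have hA : (0:ℝ) < Real.exp (-(c*a)) := Real.exp_pos _
  have hB : (0:ℝ) < Real.exp (-(c*b)) := Real.exp_pos _
  have hBA : Real.exp (-(c*b)) < Real.exp (-(c*a)) := by
    apply Real.exp_lt_exp.2; nlinarith
  have hL : 0 < (1-u) * Real.exp (-(c*a)) + u * Real.exp (-(c*b)) := by nlinarith
  have hconv : Real.exp (-(c*(a + (b-a)*u)))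
      ≤ (1-u) * Real.exp (-(c*a)) + u * Real.exp (-(c*b)) := by
    have := convexOn_exp.2 (Set.mem_univ (-(c*a))) (Set.mem_univ (-(c*b)))
      (by linarith : (0:ℝ) ≤ 1 - u) h0 (by ring)
    have h2 : -(c*(a + (b-a)*u)) = (1-u) * (-(c*a)) + u * (-(c*b)) := by ring
    rw [h2]; simpa [smul_eq_mul] using this
  have hlog : -(c*(a + (b-a)*u))
      ≤ Real.log ((1-u) * Real.exp (-(c*a)) + u * Real.exp (-(c*b))) := by
    rw [Real.le_log_iff_exp_le hL]; exact hconv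
  rw [psi, neg_mul, neg_le, one_div_mul_eq_div, le_div_iff₀ hc]
  nlinarith

end CondExpAux

end CondExpAuxSec

open CondExpAux Real Set in
/-- Lemma 10: if `V₁,…,V_k` are independent, `V_i` an Exponential(rate `λ_i`) conditioned
to lie in `[a,b]`, then for arbitrary `v_i ∈ [a,b]`,
`E[(max(0, Σ v_i − Σ V_i))²] ≥ (b−a)² F_k(Σ (v_i − a)/(b−a))`. -/
theorem conditioned_exponential_shortfall_bound
    {Ω : Type} [MeasurableSpace Ω] (μ : Measure Ω) [IsProbabilityMeasure μ]
    (k : ℕ) (hk : 1 ≤ k) (a b : ℝ) (hab : 0 < a) (hab' : a < b)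
    (lam : Fin k → ℝ) (hlam : ∀ i, 0 < lam i)
    (Vf : Fin k → Ω → ℝ) (hmeas : ∀ i, Measurable (Vf i))
    (hindep : iIndepFun Vf μ)
    (hlaw : ∀ i, Measure.map (Vf i) μ = (expMeasure (lam i))[|Set.Icc a b])
    (v : Fin k → ℝ) (hv : ∀ i, v i ∈ Set.Icc a b) :
    (b - a) ^ 2 * uniformShortfallSq k (∑ i, (v i - a) / (b - a))
      ≤ ∫ ω, (max 0 (∑ i, v i - ∑ i, Vf i ω)) ^ 2 ∂μ := by
  classical
  set S : ℝ := ∑ i, v i with hS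
  set s : ℝ := ∑ i, (v i - a) / (b - a) with hs
  have hba : (0:ℝ) < b - a := by linarith
  have hSnn : 0 ≤ S := Finset.sum_nonneg fun i _ => le_trans hab.le (hv i).1
  set ρ0 : Measure ℝ := volume.restrict (Icc (0:ℝ) 1) with hρ0
  haveI hρ0prob : IsProbabilityMeasure ρ0 := ⟨by simp [hρ0]⟩
  set P0 : Measure (Fin k → ℝ) := Measure.pi (fun _ => ρ0) with hP0
  set ν : Fin k → Measure ℝ := fun i => (expMeasure (lam i))[|Icc a b] with hν
  have hνprob : ∀ i, IsProbabilityMeasure (ν i) := by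
    intro i
    haveI := isProbabilityMeasure_expMeasure (hlam i)
    refine cond_isProbabilityMeasure ?_
    rw [expMeasure_Icc (hlam i) hab.le hab'.le]
    simp only [ne_eq, ENNReal.ofReal_eq_zero, not_le, sub_pos]
    apply Real.exp_lt_exp.2; nlinarith [hlam i]
  haveI hνsf : ∀ i, SigmaFinite (ν i) := fun i => by
    haveI := hνprob i; infer_instance
  -- joint law is the product of the marginals
  have hJmeas : Measurable (fun ω (i : Fin k) => Vf i ω) :=
    measurable_pi_lambda _ hmeas
  have hjoint : Measure.map (fun ω i => Vf i ω) μ = Measure.pi ν := by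
    refine (Measure.pi_eq fun t ht => ?_).symm
    rw [Measure.map_apply hJmeas (MeasurableSet.univ_pi ht)]
    have hpre : (fun ω i => Vf i ω) ⁻¹' Set.pi univ t = ⋂ i, Vf i ⁻¹' t i := by
      ext ω; simp [Set.mem_pi]
    rw [hpre]
    have hprod := hindep.measure_inter_preimage_eq_mul Finset.univ
      (sets := t) (fun i _ => ht i)
    simp only [Finset.mem_univ, Set.iInter_true, Set.iInter_coe_set] at hprod
    rw [hprod]
    refine Finset.prod_congr rfl fun i _ => ?_
    show μ (Vf i ⁻¹' t i) = (expMeasure (lam i))[|Icc a b] (t i)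
    rw [← hlaw i, Measure.map_apply (hmeas i) (ht i)]
  -- the product measure is a pushforward of the product of uniforms
  set Ψ : (Fin k → ℝ) → (Fin k → ℝ) := fun x i => psi (lam i) a b (x i) with hΨ
  have hΨmeas : Measurable Ψ :=
    measurable_pi_lambda _ fun i =>
      (measurable_psi (lam i) a b).comp (measurable_pi_apply i)
  have hmap : Measure.map Ψ P0 = Measure.pi ν := by
    refine (Measure.pi_eq fun t ht => ?_).symm
    rw [Measure.map_apply hΨmeas (MeasurableSet.univ_pi ht)]
    have hpre : Ψ ⁻¹' Set.pi univ t
        = Set.pi univ (fun i => psi (lam i) a b ⁻¹' t i) := by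
      ext x; simp [hΨ, Set.mem_pi]
    rw [hpre, hP0, Measure.pi_pi]
    refine Finset.prod_congr rfl fun i _ => ?_
    calc ρ0 (psi (lam i) a b ⁻¹' t i)
        = Measure.map (psi (lam i) a b) (volume.restrict (Icc (0:ℝ) 1)) (t i) := by
          rw [Measure.map_apply (measurable_psi (lam i) a b) (ht i), hρ0]
      _ = _ := by rw [map_psi (hlam i) hab hab']
  -- continuity of the integrand
  have hgcont : Continuous (fun x : Fin k → ℝ => (max 0 (S - ∑ i, x i)) ^ 2) := by
    apply Continuous.pow
    exact continuous_const.max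
      (continuous_const.sub (continuous_finset_sum _ fun i _ => continuous_apply i))
  -- rewrite the RHS integral
  have hstep1 : ∫ ω, (max 0 (S - ∑ i, Vf i ω)) ^ 2 ∂μ
      = ∫ x : Fin k → ℝ, (max 0 (S - ∑ i, x i)) ^ 2 ∂(Measure.pi ν) := by
    rw [← hjoint, integral_map hJmeas.aemeasurable hgcont.aestronglyMeasurable]
  have hstep2 : ∫ x : Fin k → ℝ, (max 0 (S - ∑ i, x i)) ^ 2 ∂(Measure.pi ν)
      = ∫ x : Fin k → ℝ, (max 0 (S - ∑ i, psi (lam i) a b (x i))) ^ 2 ∂P0 := by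
    rw [← hmap, integral_map hΨmeas.aemeasurable hgcont.aestronglyMeasurable]
  -- a.e. every coordinate lies in [0,1]
  have hae : ∀ᵐ x ∂P0, ∀ i, x i ∈ Icc (0:ℝ) 1 := by
    rw [ae_all_iff]
    intro i
    have h0 : ρ0 ((Icc (0:ℝ) 1)ᶜ) = 0 := by
      rw [hρ0, Measure.restrict_apply (measurableSet_Icc.compl)]
      simp
    have := Measure.pi_eval_preimage_null (μ := fun _ : Fin k => ρ0) h0 (i := i)
    rw [ae_iff]
    convert this using 2
    rfl
  -- integrability and comparison
  have habound : ∀ᵐ x ∂P0, ‖(max 0 (S - ∑ i, psi (lam i) a b (x i))) ^ 2‖ ≤ S ^ 2 := by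
    filter_upwards [hae] with x hx
    have h1 : ∀ i, a ≤ psi (lam i) a b (x i) := fun i =>
      psi_ge (hlam i) hab' (hx i).1 (hx i).2
    have hsum : 0 ≤ ∑ i, psi (lam i) a b (x i) :=
      Finset.sum_nonneg fun i _ => le_trans hab.le (h1 i)
    have hmax : max 0 (S - ∑ i, psi (lam i) a b (x i)) ≤ S :=
      max_le hSnn (by linarith)
    rw [Real.norm_eq_abs, abs_of_nonneg (by positivity)]
    exact pow_le_pow_left₀ (le_max_left _ _) hmax 2
  have hint1 : Integrable (fun x : Fin k → ℝ =>
      (max 0 (S - ∑ i, psi (lam i) a b (x i))) ^ 2) P0 := by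
    refine Integrable.mono' (integrable_const (S ^ 2)) ?_ habound
    exact (hgcont.measurable.comp hΨmeas).aestronglyMeasurable
  have hcont2 : Continuous (fun x : Fin k → ℝ =>
      (max 0 (S - ∑ i, (a + (b - a) * x i))) ^ 2) := by
    apply Continuous.pow
    exact continuous_const.max (continuous_const.sub
      (continuous_finset_sum _ fun i _ =>
        continuous_const.add (continuous_const.mul (continuous_apply i))))
  have habound2 : ∀ᵐ x ∂P0, ‖(max 0 (S - ∑ i, (a + (b - a) * x i))) ^ 2‖ ≤ S ^ 2 := by
    filter_upwards [hae] with x hx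
    have hsum : 0 ≤ ∑ i, (a + (b - a) * x i) :=
      Finset.sum_nonneg fun i _ => by nlinarith [(hx i).1, hab, hba]
    have hmax : max 0 (S - ∑ i, (a + (b - a) * x i)) ≤ S := max_le hSnn (by linarith)
    rw [Real.norm_eq_abs, abs_of_nonneg (by positivity)]
    exact pow_le_pow_left₀ (le_max_left _ _) hmax 2
  have hint2 : Integrable (fun x : Fin k → ℝ =>
      (max 0 (S - ∑ i, (a + (b - a) * x i))) ^ 2) P0 :=
    Integrable.mono' (integrable_const (S ^ 2))
      hcont2.measurable.aestronglyMeasurable habound2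
  have hmono : (fun x : Fin k → ℝ => (max 0 (S - ∑ i, (a + (b - a) * x i))) ^ 2)
      ≤ᵐ[P0] fun x => (max 0 (S - ∑ i, psi (lam i) a b (x i))) ^ 2 := by
    filter_upwards [hae] with x hx
    have hle : ∑ i, psi (lam i) a b (x i) ≤ ∑ i, (a + (b - a) * x i) :=
      Finset.sum_le_sum fun i _ => psi_le (hlam i) hab' (hx i).1 (hx i).2
    have hmm : max 0 (S - ∑ i, (a + (b - a) * x i))
        ≤ max 0 (S - ∑ i, psi (lam i) a b (x i)) :=
      max_le_max le_rfl (by linarith)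
    exact pow_le_pow_left₀ (le_max_left _ _) hmm 2
  -- the final identification of the left-hand side
  have hfinal : (b - a) ^ 2 * uniformShortfallSq k s
      = ∫ x : Fin k → ℝ, (max 0 (S - ∑ i, (a + (b - a) * x i))) ^ 2 ∂P0 := by
    unfold uniformShortfallSq
    rw [← hρ0, ← hP0, ← integral_const_mul]
    refine integral_congr_ae (Filter.Eventually.of_forall fun x => ?_)
    have h1 : (b - a) * s = ∑ i, (v i - a) := by
      rw [hs, Finset.mul_sum]
      exact Finset.sum_congr rfl fun i _ => by field_simp
    have key : (b - a) * (s - ∑ i, x i) = S - ∑ i, (a + (b - a) * x i) := by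
      rw [mul_sub, h1, hS, Finset.sum_add_distrib, Finset.sum_sub_distrib, Finset.mul_sum]
      ring
    calc (b - a) ^ 2 * (max 0 (s - ∑ i, x i)) ^ 2
        = ((b - a) * max 0 (s - ∑ i, x i)) ^ 2 := by ring
      _ = (max 0 ((b - a) * (s - ∑ i, x i))) ^ 2 := by
          rw [mul_max_of_nonneg _ _ hba.le, mul_zero]
      _ = (max 0 (S - ∑ i, (a + (b - a) * x i))) ^ 2 := by rw [key]
  calc (b - a) ^ 2 * uniformShortfallSq k s
      = ∫ x : Fin k → ℝ, (max 0 (S - ∑ i, (a + (b - a) * x i))) ^ 2 ∂P0 := hfinal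
    _ ≤ ∫ x : Fin k → ℝ, (max 0 (S - ∑ i, psi (lam i) a b (x i))) ^ 2 ∂P0 :=
        integral_mono_ae hint2 hint1 hmono
    _ = ∫ x : Fin k → ℝ, (max 0 (S - ∑ i, x i)) ^ 2 ∂(Measure.pi ν) := hstep2.symm
    _ = ∫ ω, (max 0 (S - ∑ i, Vf i ω)) ^ 2 ∂μ := hstep1.symm
end
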